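/- Let T₀, T₁ : ℝ → ℝ be given by T₀(x) = x/2 and T₁(x) = (3x+1)/2. For every real number x₀ > 0, the forward orbit O⁺(x₀) = { T_{i₁} ∘ ⋯ ∘ T_{iₙ}(x₀) : n ≥ 1, each i_k ∈ {0,1} } of x₀ under the semigroup generated by T₀ and T₁ is dense in the interval (0, ∞). -/

import Mathlib

open Filter Set

/-- Apply the composition T_{i₁} ∘ ⋯ ∘ T_{iₙ} to x, where `false` stands for
T₀(x) = x/2 and `true` stands for T₁(x) = (3x+1)/2, and the list is
[i₁, …, iₙ]. -/
noncomputable def applyWord (l : List Bool) (x : ℝ) : ℝ :=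
  l.foldr (fun b y => if b then (3 * y + 1) / 2 else y / 2) x

/-- `log 3 / log 2` is irrational. -/
lemma irrational_log_three_div_log_two : Irrational (Real.log 3 / Real.log 2) := by
  rintro ⟨q, hq⟩
  have h2 : (0:ℝ) < Real.log 2 := Real.log_pos (by norm_num)
  have h3 : (q:ℝ) * Real.log 2 = Real.log 3 := by
    field_simp [h2.ne'] at hq; linarith [hq]
  have hden : (q.den : ℝ) * Real.log 3 = (q.num:ℝ) * Real.log 2 := by
    have hqd : ((q.den:ℚ) * q) = (q.num:ℚ) := by
      rw [mul_comm]; exact_mod_cast Rat.mul_den_eq_num q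
    have hqd' : ((q.den:ℝ) * q) = (q.num:ℝ) := by exact_mod_cast congrArg (Rat.cast : ℚ → ℝ) hqd
    calc (q.den : ℝ) * Real.log 3 = ((q.den:ℝ) * q) * Real.log 2 := by rw [← h3]; ring
      _ = (q.num:ℝ) * Real.log 2 := by rw [hqd']
  have hEq : ((3:ℝ) ^ q.den) = (2:ℝ) ^ q.num := by
    have h1 : Real.log ((3:ℝ)^q.den) = Real.log ((2:ℝ)^q.num) := by
      rw [Real.log_pow, Real.log_zpow]; exact_mod_cast hden
    exact Real.log_injOn_pos (Set.mem_Ioi.2 (by positivity))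
      (Set.mem_Ioi.2 (zpow_pos (by norm_num) _)) h1
  have h31 : (1:ℝ) < 3 ^ q.den := one_lt_pow₀ (by norm_num) q.den_nz
  have hnum : 0 < q.num := by
    by_contra h; push_neg at h
    have : (2:ℝ) ^ q.num ≤ 1 := zpow_le_one_of_nonpos₀ (by norm_num) h
    linarith [hEq ▸ this]
  set k := q.num.toNat with hk
  have hk' : (q.num : ℤ) = (k : ℤ) := by simp [hk, Int.toNat_of_nonneg hnum.le]
  rw [hk', zpow_natCast] at hEq
  have hNat : (3:ℕ)^q.den = 2^k := by exact_mod_cast hEq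
  have hk0 : k ≠ 0 := by
    intro h0; rw [h0, pow_zero] at hNat
    have h31' : 1 < (3:ℕ) ^ q.den := Nat.one_lt_pow q.den_nz (by norm_num)
    omega
  have hdvd : (2:ℕ) ∣ 3 ^ q.den := hNat ▸ dvd_pow_self 2 hk0
  have := Nat.Prime.dvd_of_dvd_pow Nat.prime_two hdvd
  norm_num at this

set_option maxHeartbeats 1000000 in
/-- Density of the natural-number orbit of an irrational rotation, pulled back
to the real line, with an arbitrarily large lower bound on the index. -/
lemma exists_nat_int_smul_mem_Ioo {ξ : ℝ} (hξ : Irrational ξ) {α β : ℝ} (hαβ : α < β)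
    (M : ℕ) : ∃ (m : ℕ) (k : ℤ), M ≤ m ∧ (m:ℝ) * ξ - k ∈ Set.Ioo α β := by
  haveI : Fact ((0:ℝ) < 1) := ⟨one_pos⟩
  have hS : Dense ((AddSubgroup.closure {ξ, 1} : AddSubgroup ℝ) : Set ℝ) := by
    rcases AddSubgroup.dense_or_cyclic (AddSubgroup.closure {ξ, 1}) with h | ⟨a, ha⟩
    · exact h
    · exfalso
      have hξS : ξ ∈ AddSubgroup.closure ({ξ, 1} : Set ℝ) := AddSubgroup.subset_closure (by simp)
      have h1S : (1:ℝ) ∈ AddSubgroup.closure ({ξ, 1} : Set ℝ) := AddSubgroup.subset_closure (by simp)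
      rw [ha, AddSubgroup.mem_closure_singleton] at hξS h1S
      obtain ⟨m, hm⟩ := hξS
      obtain ⟨n, hn⟩ := h1S
      have hn0 : (n:ℝ) ≠ 0 := by
        intro h; rw [zsmul_eq_mul, h, zero_mul] at hn; norm_num at hn
      refine hξ ⟨(m:ℚ)/(n:ℚ), ?_⟩
      have ha' : a = 1 / n := by
        rw [zsmul_eq_mul] at hn; field_simp at hn ⊢; linarith
      rw [zsmul_eq_mul, ha'] at hm
      push_cast
      rw [← hm]; ring
  have hfcont : Continuous (fun r : ℝ => (r : AddCircle (1:ℝ))) := AddCircle.continuous_mk' 1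
  have hfsurj : Function.Surjective (fun r : ℝ => (r : AddCircle (1:ℝ))) :=
    fun z => QuotientAddGroup.mk_surjective z
  have hdense : Dense (Set.range fun m : ℤ => m • ((ξ : ℝ) : AddCircle (1:ℝ))) := by
    have himg : Dense ((fun r : ℝ => (r : AddCircle (1:ℝ))) ''
        ((AddSubgroup.closure {ξ, 1} : AddSubgroup ℝ) : Set ℝ)) :=
      hfsurj.denseRange.dense_image hfcont hS
    refine himg.mono ?_
    rintro _ ⟨s, hs, rfl⟩
    obtain ⟨m, n, rfl⟩ := AddSubgroup.mem_closure_pair.1 hs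
    refine ⟨m, ?_⟩
    have : ((m • ξ + n • (1:ℝ) : ℝ) : AddCircle (1:ℝ))
        = m • ((ξ : ℝ) : AddCircle (1:ℝ)) := by
      rw [QuotientAddGroup.mk_add, QuotientAddGroup.mk_zsmul, QuotientAddGroup.mk_zsmul,
        AddCircle.coe_period, smul_zero, add_zero]
    exact this.symm
  have hxcl : (((α+β)/2 : ℝ) : AddCircle (1:ℝ)) ∈
      closure (Set.range fun m : ℤ => m • ((ξ : ℝ) : AddCircle (1:ℝ))) :=
    hdense _
  have htfae := mapClusterPt_atTop_nsmul_tfae (G := AddCircle (1:ℝ))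
    (((α+β)/2 : ℝ) : AddCircle (1:ℝ)) ((ξ : ℝ) : AddCircle (1:ℝ))
  have hcl : MapClusterPt (((α+β)/2 : ℝ) : AddCircle (1:ℝ)) atTop
      (fun n : ℕ => n • ((ξ : ℝ) : AddCircle (1:ℝ))) :=
    (htfae.out 3 0).mp hxcl
  have hUopen : IsOpen ((fun r : ℝ => (r : AddCircle (1:ℝ))) '' Set.Ioo α β) :=
    QuotientAddGroup.isOpenMap_coe _ isOpen_Ioo
  have hxU : (((α+β)/2 : ℝ) : AddCircle (1:ℝ)) ∈
      (fun r : ℝ => (r : AddCircle (1:ℝ))) '' Set.Ioo α β :=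
    ⟨(α+β)/2, ⟨by linarith, by linarith⟩, rfl⟩
  have hfreq := (mapClusterPt_iff_frequently.mp hcl) _ (hUopen.mem_nhds hxU)
  obtain ⟨m, hMm, hmem⟩ := (Filter.frequently_atTop.1 hfreq) M
  obtain ⟨r, hr, hrm⟩ := hmem
  have heq : ((r : ℝ) : AddCircle (1:ℝ)) = (((m:ℝ) * ξ : ℝ) : AddCircle (1:ℝ)) := by
    rw [show ((r : ℝ) : AddCircle (1:ℝ)) = m • ((ξ:ℝ) : AddCircle (1:ℝ)) from hrm,
      ← QuotientAddGroup.mk_nsmul, nsmul_eq_mul]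
  rw [QuotientAddGroup.eq_iff_sub_mem] at heq
  obtain ⟨k, hk⟩ := AddSubgroup.mem_zmultiples_iff.mp heq
  refine ⟨m, -k, hMm, ?_⟩
  have h1 : r - (m:ℝ) * ξ = (k:ℝ) := by rw [← hk]; simp [zsmul_eq_mul]
  have h2 : (m:ℝ) * ξ - ((-k : ℤ) : ℝ) = r := by push_cast; linarith
  rw [h2]; exact hr

lemma applyWord_replicate_true (m : ℕ) (x : ℝ) :
    applyWord (List.replicate m true) x = (3/2)^m * (x+1) - 1 := by
  induction m with
  | zero => simp [applyWord]
  | succ n ih =>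
      rw [List.replicate_succ]
      simp only [applyWord, List.foldr_cons, reduceIte] at ih ⊢
      rw [ih]; ring

lemma applyWord_replicate_false_append (n : ℕ) (l : List Bool) (x : ℝ) :
    applyWord (List.replicate n false ++ l) x = applyWord l x / 2^n := by
  induction n with
  | zero => simp [applyWord]
  | succ k ih =>
      rw [List.replicate_succ]
      simp only [applyWord, List.foldr_cons, List.foldr_append, if_neg Bool.false_ne_true] at ih ⊢
      rw [ih]; ring

/-- (Misiurewicz–Rodrigues, 2005) For every x₀ > 0, the forward orbit of x₀
under the semigroup generated by T₀(x) = x/2 and T₁(x) = (3x+1)/2 is dense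
in (0, ∞). -/
theorem orbit_dense_in_positive_reals (x₀ : ℝ) (hx₀ : 0 < x₀) :
    Set.Ioi (0 : ℝ) ⊆
      closure {y : ℝ | ∃ l : List Bool, l ≠ [] ∧ applyWord l x₀ = y} := by
  intro y hy
  rw [Set.mem_Ioi] at hy
  rw [Metric.mem_closure_iff]
  intro ε hε
  set c : ℝ := x₀ + 1 with hc
  have hc1 : 1 < c := by simp [hc]; linarith
  have hcpos : 0 < c := by linarith
  set δ : ℝ := min (ε/2) (y/2) with hδdef
  have hδ : 0 < δ := lt_min (by linarith) (by linarith)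
  have hδε : δ ≤ ε/2 := min_le_left _ _
  have hδy : δ ≤ y/2 := min_le_right _ _
  set a : ℝ := y - δ with hadef
  set b : ℝ := y + δ with hbdef
  have hapos : 0 < a := by simp only [hadef]; linarith
  have hab : a < b := by simp only [hadef, hbdef]; linarith
  obtain ⟨N₀, hN₀⟩ := exists_pow_lt_of_lt_one (show (0:ℝ) < ε/2 by linarith)
    (show (1/2 : ℝ) < 1 by norm_num)
  set N : ℕ := N₀ + 1 with hNdef
  have hN1 : 1 ≤ N := Nat.le_add_left 1 N₀
  have hNε : (1/2:ℝ)^N ≤ (1/2:ℝ)^N₀ :=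
    pow_le_pow_of_le_one (by norm_num) (by norm_num) (Nat.le_succ N₀)
  have hNε' : (1/2:ℝ)^N < ε/2 := lt_of_le_of_lt hNε hN₀
  have hlog2 : (0:ℝ) < Real.log 2 := Real.log_pos (by norm_num)
  have hlog3 : Real.log 2 < Real.log 3 := Real.log_lt_log (by norm_num) (by norm_num)
  set ξ : ℝ := Real.log 3 / Real.log 2 - 1 with hξdef
  have hξirr : Irrational ξ := by
    have := (irrational_log_three_div_log_two).sub_intCast 1
    simpa using this
  have hξpos : 0 < ξ := by
    have : 1 < Real.log 3 / Real.log 2 := (one_lt_div hlog2).2 hlog3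
    simp only [hξdef]; linarith
  have hξlog : ξ * Real.log 2 = Real.log (3/2) := by
    rw [Real.log_div (by norm_num) (by norm_num), hξdef]
    field_simp
  set α : ℝ := (Real.log a - Real.log c)/Real.log 2 with hαdef
  set β : ℝ := (Real.log b - Real.log c)/Real.log 2 with hβdef
  have hαβ : α < β := by
    have h := Real.log_lt_log hapos hab
    rw [hαdef, hβdef, div_lt_div_iff_of_pos_right hlog2]
    linarith
  obtain ⟨M, hM⟩ := exists_nat_ge ((N + β + 1)/ξ)
  obtain ⟨m, k, hMm, hmk⟩ := exists_nat_int_smul_mem_Ioo hξirr hαβ M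
  obtain ⟨hmk1, hmk2⟩ := hmk
  have hMξ : (N:ℝ) + β + 1 ≤ (M:ℝ) * ξ := (div_le_iff₀ hξpos).mp hM
  have hmξ : (M:ℝ) * ξ ≤ (m:ℝ) * ξ :=
    mul_le_mul_of_nonneg_right (by exact_mod_cast hMm) hξpos.le
  have hkN : (N:ℝ) < (k:ℝ) := by linarith
  have hk0 : (0:ℤ) ≤ k := by
    have h' : ((N:ℤ):ℝ) < (k:ℝ) := by exact_mod_cast hkN
    have h'' : (N:ℤ) < k := by exact_mod_cast h'
    omega
  set n : ℕ := k.toNat with hndef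
  have hnk : ((n:ℝ)) = (k:ℝ) := by
    rw [hndef]; exact_mod_cast congrArg (Int.cast : ℤ → ℝ) (Int.toNat_of_nonneg hk0)
  have hNn : N ≤ n := by
    have : (N:ℝ) < (n:ℝ) := by rw [hnk]; exact hkN
    exact_mod_cast this.le
  have hr1 : α < (m:ℝ) * ξ - n := by rw [hnk]; exact hmk1
  have hr2 : (m:ℝ) * ξ - n < β := by rw [hnk]; exact hmk2
  set v : ℝ := (3/2:ℝ)^m / 2^n * c with hvdef
  have hvpos : 0 < v := by positivity
  have hlogv : Real.log v = ((m:ℝ) * ξ - n) * Real.log 2 + Real.log c := by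
    rw [hvdef, Real.log_mul (by positivity) hcpos.ne', Real.log_div (by positivity)
      (by positivity), Real.log_pow, Real.log_pow]
    have hh : (m:ℝ) * Real.log (3/2) = (m:ℝ) * ξ * Real.log 2 := by rw [← hξlog]; ring
    rw [hh]; ring
  have hαa : α * Real.log 2 = Real.log a - Real.log c := by
    rw [hαdef]; field_simp
  have hβb : β * Real.log 2 = Real.log b - Real.log c := by
    rw [hβdef]; field_simp
  have hva : Real.log a < Real.log v := by
    rw [hlogv]
    have := mul_lt_mul_of_pos_right hr1 hlog2
    rw [hαa] at this; linarith
  have hvb : Real.log v < Real.log b := by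
    rw [hlogv]
    have := mul_lt_mul_of_pos_right hr2 hlog2
    rw [hβb] at this; linarith
  have hav : a < v := by
    have := Real.exp_lt_exp.mpr hva
    rwa [Real.exp_log hapos, Real.exp_log hvpos] at this
  have hvb' : v < b := by
    have := Real.exp_lt_exp.mpr hvb
    rwa [Real.exp_log hvpos, Real.exp_log (by linarith : (0:ℝ) < b)] at this
  set l : List Bool := List.replicate n false ++ List.replicate m true with hldef
  have hlne : l ≠ [] := by
    intro h
    have := congrArg List.length h
    simp [hldef] at this
    omega
  have hw : applyWord l x₀ = v - 1/2^n := by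
    rw [hldef, applyWord_replicate_false_append, applyWord_replicate_true, hvdef]
    rw [← hc]; ring
  refine ⟨applyWord l x₀, ⟨l, hlne, rfl⟩, ?_⟩
  rw [Real.dist_eq, hw]
  have h2n : (1:ℝ)/2^n ≤ (1/2:ℝ)^N := by
    rw [div_pow, one_pow]
    apply div_le_div_of_nonneg_left (by norm_num) (by positivity)
    exact pow_le_pow_right₀ (by norm_num) hNn
  have h2n' : (1:ℝ)/2^n < ε/2 := lt_of_le_of_lt h2n hNε'
  have hyv : |y - v| < δ := by
    rw [abs_sub_lt_iff]
    constructor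
    · simp only [hbdef] at hvb'; linarith
    · simp only [hadef] at hav; linarith
  calc |y - (v - 1/2^n)| ≤ |y - v| + |(1:ℝ)/2^n| := by
        have hrw : y - (v - 1/2^n) = (y - v) + 1/2^n := by ring
        rw [hrw]; exact abs_add_le _ _
    _ < δ + ε/2 := by
        apply add_lt_add hyv
        rwa [abs_of_pos (by positivity)]
    _ ≤ ε := by linarith
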